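/- For n ≥ 1 and 0 < q < n, there exists a constant A > 0 such that for all x ∈ ℝⁿ, |lim_{ε→0} ∫_{|y|≥ε} (⟨x⟩^{-q} − ⟨x+y⟩^{-q}) / |y|^{n+1} dy| ≤ A ⟨x⟩^{-q-1}. -/

import Mathlib

open Filter MeasureTheory Metric Set Real

noncomputable section HalfLap

variable {n : ℕ}

local notation "E" => EuclideanSpace ℝ (Fin n)

lemma hl_meas_annulus (a b : ℝ) : MeasurableSet {y : E | a ≤ ‖y‖ ∧ ‖y‖ ≤ b} := by
  have : {y : E | a ≤ ‖y‖ ∧ ‖y‖ ≤ b} = (fun y : E => ‖y‖) ⁻¹' (Set.Icc a b) := rfl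
  rw [this]
  exact measurable_norm measurableSet_Icc

lemma hl_annulus_bound (r a b : ℝ) (ha : 0 < a) (hab : a ≤ b) :
    ∫⁻ y in {y : E | a ≤ ‖y‖ ∧ ‖y‖ ≤ b}, ENNReal.ofReal (‖y‖ ^ r) ≤
    ENNReal.ofReal ((a ^ r + b ^ r) * b ^ ((n : ℝ))) * volume (ball (0 : E) 1) := by
  have hb0 : 0 ≤ b := ha.le.trans hab
  have hpt : ∀ y ∈ {y : E | a ≤ ‖y‖ ∧ ‖y‖ ≤ b},
      ENNReal.ofReal (‖y‖ ^ r) ≤ ENNReal.ofReal (a ^ r + b ^ r) := by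
    rintro y ⟨h1, h2⟩
    apply ENNReal.ofReal_le_ofReal
    rcases le_or_gt 0 r with hr | hr
    · have : ‖y‖ ^ r ≤ b ^ r := Real.rpow_le_rpow (norm_nonneg _) h2 hr
      have ha' : 0 ≤ a ^ r := Real.rpow_nonneg ha.le _
      linarith
    · have : ‖y‖ ^ r ≤ a ^ r := Real.rpow_le_rpow_of_nonpos ha h1 hr.le
      have hb' : 0 ≤ b ^ r := Real.rpow_nonneg hb0 _
      linarith
  calc ∫⁻ y in {y : E | a ≤ ‖y‖ ∧ ‖y‖ ≤ b}, ENNReal.ofReal (‖y‖ ^ r)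
      ≤ ∫⁻ _ in {y : E | a ≤ ‖y‖ ∧ ‖y‖ ≤ b}, ENNReal.ofReal (a ^ r + b ^ r) :=
        setLIntegral_mono' (hl_meas_annulus a b) hpt
    _ = ENNReal.ofReal (a ^ r + b ^ r) * volume {y : E | a ≤ ‖y‖ ∧ ‖y‖ ≤ b} :=
        setLIntegral_const _ _
    _ ≤ ENNReal.ofReal (a ^ r + b ^ r) * volume (closedBall (0 : E) b) := by
        gcongr
        intro y hy
        simpa [mem_closedBall_zero_iff] using hy.2
    _ = ENNReal.ofReal (a ^ r + b ^ r) *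
          (ENNReal.ofReal (b ^ Module.finrank ℝ (EuclideanSpace ℝ (Fin n))) *
            volume (ball (0 : E) 1)) := by
        rw [Measure.addHaar_closedBall _ _ hb0]
    _ = ENNReal.ofReal ((a ^ r + b ^ r) * b ^ ((n : ℝ))) * volume (ball (0 : E) 1) := by
        rw [← mul_assoc, ← ENNReal.ofReal_mul (by positivity)]
        congr 2
        rw [finrank_euclideanSpace_fin, ← Real.rpow_natCast b n]

lemma hl_exists_scale (t : ℝ) (h1 : 1 ≤ t) :
    ∃ k : ℕ, (2 : ℝ) ^ ((k : ℝ)) ≤ t ∧ t ≤ 2 ^ ((k : ℝ) + 1) := by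
  refine ⟨⌊Real.logb 2 t⌋₊, ?_, ?_⟩
  · calc (2 : ℝ) ^ ((⌊Real.logb 2 t⌋₊ : ℝ)) ≤ 2 ^ (Real.logb 2 t) :=
        Real.rpow_le_rpow_of_exponent_le one_le_two
          (Nat.floor_le (Real.logb_nonneg one_lt_two h1))
    _ = t := Real.rpow_logb two_pos (by norm_num) (by linarith)
  · calc t = 2 ^ (Real.logb 2 t) := (Real.rpow_logb two_pos (by norm_num) (by linarith)).symm
    _ ≤ 2 ^ ((⌊Real.logb 2 t⌋₊ : ℝ) + 1) :=
        Real.rpow_le_rpow_of_exponent_le one_le_two (Nat.lt_floor_add_one _).le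

lemma hl_exists_scale_small (t : ℝ) (h0 : 0 < t) (h1 : t ≤ 1) :
    ∃ k : ℕ, (2 : ℝ) ^ (-((k : ℝ) + 1)) ≤ t ∧ t ≤ 2 ^ (-(k : ℝ)) := by
  obtain ⟨k, hk1, hk2⟩ := hl_exists_scale t⁻¹ (one_le_inv_iff₀.2 ⟨h0, h1⟩)
  refine ⟨k, ?_, ?_⟩
  · rw [Real.rpow_neg (by norm_num)]
    rw [inv_le_comm₀ (Real.rpow_pos_of_pos two_pos _) h0]
    exact hk2
  · rw [Real.rpow_neg (by norm_num)]
    rw [le_inv_comm₀ h0 (Real.rpow_pos_of_pos two_pos _)]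
    exact hk1

lemma hl_term_arith (k : ℕ) (r nn R : ℝ) (hR : 0 < R) :
    ((R * 2 ^ (-((k:ℝ)+1))) ^ r + (R * 2 ^ (-(k:ℝ))) ^ r) * (R * 2 ^ (-(k:ℝ))) ^ nn
    = (((2:ℝ) ^ (-r) + 1) * R ^ (nn + r)) * ((2:ℝ) ^ (-(nn + r))) ^ k := by
  have h2 : (0:ℝ) < 2 := two_pos
  have p2 : ∀ u : ℝ, (0:ℝ) < 2 ^ u := fun u => Real.rpow_pos_of_pos h2 u
  rw [Real.mul_rpow hR.le (p2 _).le, Real.mul_rpow hR.le (p2 _).le,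
    Real.mul_rpow hR.le (p2 _).le,
    ← Real.rpow_natCast ((2:ℝ) ^ (-(nn + r))) k,
    ← Real.rpow_mul h2.le, ← Real.rpow_mul h2.le, ← Real.rpow_mul h2.le,
    ← Real.rpow_mul h2.le,
    show (-((k:ℝ)+1))*r = (-r) + (-(k:ℝ))*r from by ring,
    Real.rpow_add h2 (-r) ((-(k:ℝ))*r),
    show (-(nn+r))*(k:ℝ) = (-(k:ℝ))*r + (-(k:ℝ))*nn from by ring,
    Real.rpow_add h2 ((-(k:ℝ))*r) ((-(k:ℝ))*nn),
    show nn + r = r + nn from by ring,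
    Real.rpow_add hR r nn]
  ring

lemma hl_term_arith' (k : ℕ) (r nn R : ℝ) (hR : 0 < R) :
    ((R * 2 ^ ((k:ℝ))) ^ r + (R * 2 ^ ((k:ℝ)+1)) ^ r) * (R * 2 ^ ((k:ℝ)+1)) ^ nn
    = (((1 + (2:ℝ) ^ r) * 2 ^ nn) * R ^ (nn + r)) * ((2:ℝ) ^ (nn + r)) ^ k := by
  have h2 : (0:ℝ) < 2 := two_pos
  have p2 : ∀ u : ℝ, (0:ℝ) < 2 ^ u := fun u => Real.rpow_pos_of_pos h2 u
  rw [Real.mul_rpow hR.le (p2 _).le, Real.mul_rpow hR.le (p2 _).le,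
    Real.mul_rpow hR.le (p2 _).le,
    ← Real.rpow_natCast ((2:ℝ) ^ (nn + r)) k,
    ← Real.rpow_mul h2.le, ← Real.rpow_mul h2.le, ← Real.rpow_mul h2.le,
    ← Real.rpow_mul h2.le,
    show ((k:ℝ)+1)*r = r + (k:ℝ)*r from by ring,
    Real.rpow_add h2 r ((k:ℝ)*r),
    show ((k:ℝ)+1)*nn = nn + (k:ℝ)*nn from by ring,
    Real.rpow_add h2 nn ((k:ℝ)*nn),
    show (nn+r)*(k:ℝ) = (k:ℝ)*r + (k:ℝ)*nn from by ring,
    Real.rpow_add h2 ((k:ℝ)*r) ((k:ℝ)*nn),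
    show nn + r = r + nn from by ring,
    Real.rpow_add hR r nn]
  ring

noncomputable def hlCb (n : ℕ) (r : ℝ) : ℝ :=
  ((2 : ℝ) ^ (-r) + 1) * (1 - (2 : ℝ) ^ (-((n : ℝ) + r)))⁻¹

noncomputable def hlCc (n : ℕ) (r : ℝ) : ℝ :=
  ((1 + (2 : ℝ) ^ r) * 2 ^ ((n : ℝ))) * (1 - (2 : ℝ) ^ ((n : ℝ) + r))⁻¹

lemma hlCb_pos {n : ℕ} {r : ℝ} (hr : -(n : ℝ) < r) : 0 < hlCb n r := by
  have h1 : (2:ℝ) ^ (-((n:ℝ)+r)) < 1 :=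
    Real.rpow_lt_one_of_one_lt_of_neg one_lt_two (by linarith)
  have h2 : (0:ℝ) < 2 ^ (-r) := Real.rpow_pos_of_pos two_pos _
  have h3 : (0:ℝ) < 1 - (2:ℝ) ^ (-((n:ℝ)+r)) := by linarith
  exact mul_pos (by linarith) (by positivity)

lemma hlCc_pos {n : ℕ} {r : ℝ} (hr : r < -(n : ℝ)) : 0 < hlCc n r := by
  have h1 : (2:ℝ) ^ ((n:ℝ)+r) < 1 :=
    Real.rpow_lt_one_of_one_lt_of_neg one_lt_two (by linarith)
  have h2 : (0:ℝ) < 2 ^ r := Real.rpow_pos_of_pos two_pos _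
  have h3 : (0:ℝ) < 2 ^ ((n:ℝ)) := Real.rpow_pos_of_pos two_pos _
  have h4 : (0:ℝ) < 1 - (2:ℝ) ^ ((n:ℝ)+r) := by linarith
  exact mul_pos (by positivity) (by positivity)

lemma hl_geom_sum (c w : ℝ) (hc : 0 ≤ c) (hw0 : 0 ≤ w) (hw1 : w < 1) :
    (∑' k : ℕ, ENNReal.ofReal (c * w ^ k) * volume (ball (0:E) 1))
      = ENNReal.ofReal (c * (1 - w)⁻¹) * volume (ball (0:E) 1) := by
  rw [ENNReal.tsum_mul_right]
  congr 1
  have : ∀ k : ℕ, ENNReal.ofReal (c * w ^ k)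
      = ENNReal.ofReal c * ENNReal.ofReal w ^ k := by
    intro k
    rw [ENNReal.ofReal_mul hc, ENNReal.ofReal_pow hw0]
  simp_rw [this]
  rw [ENNReal.tsum_mul_left, ENNReal.tsum_geometric, ENNReal.ofReal_mul hc]
  congr 1
  rw [← ENNReal.ofReal_one, ← ENNReal.ofReal_sub _ hw0,
    ENNReal.ofReal_inv_of_pos (by linarith)]

lemma hl_lint_ball (hn : 1 ≤ n) (r : ℝ) (hr : -(n : ℝ) < r) (R : ℝ) (hR : 0 < R) :
    ∫⁻ y in {y : E | ‖y‖ ≤ R}, ENNReal.ofReal (‖y‖ ^ r) ≤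
    ENNReal.ofReal (hlCb n r * R ^ ((n : ℝ) + r)) * volume (ball (0 : E) 1) := by
  set w : ℝ := (2 : ℝ) ^ (-((n : ℝ) + r)) with hw
  have hw0 : 0 < w := Real.rpow_pos_of_pos two_pos _
  have hw1 : w < 1 := Real.rpow_lt_one_of_one_lt_of_neg one_lt_two (by linarith)
  set A : ℕ → Set (EuclideanSpace ℝ (Fin n)) := fun k =>
    {y | R * 2 ^ (-((k : ℝ) + 1)) ≤ ‖y‖ ∧ ‖y‖ ≤ R * 2 ^ (-(k : ℝ))} with hA
  have hsub : {y : E | ‖y‖ ≤ R} \ {0} ⊆ ⋃ k, A k := by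
    rintro y ⟨hyR, hy0⟩
    have hy0' : 0 < ‖y‖ := by
      simpa [norm_pos_iff] using (Set.mem_singleton_iff.not.1 hy0)
    obtain ⟨k, hk1, hk2⟩ := hl_exists_scale_small (‖y‖ / R) (by positivity)
      ((div_le_one hR).2 hyR)
    refine Set.mem_iUnion.2 ⟨k, ?_, ?_⟩
    · rw [← le_div_iff₀' hR]; exact hk1
    · rw [← div_le_iff₀' hR]; exact hk2
  haveI : Nonempty (Fin n) := ⟨⟨0, hn⟩⟩
  haveI : Nontrivial (EuclideanSpace ℝ (Fin n)) := inferInstance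
  have hae : (volume : Measure (EuclideanSpace ℝ (Fin n)))
      ({y : E | ‖y‖ ≤ R} ∩ {0}) = 0 :=
    measure_mono_null Set.inter_subset_right (measure_singleton 0)
  calc ∫⁻ y in {y : E | ‖y‖ ≤ R}, ENNReal.ofReal (‖y‖ ^ r)
      = ∫⁻ y in {y : E | ‖y‖ ≤ R} \ {0}, ENNReal.ofReal (‖y‖ ^ r) := by
        rw [Measure.restrict_congr_set (diff_ae_eq_self.2 hae).symm]
    _ ≤ ∫⁻ y in ⋃ k, A k, ENNReal.ofReal (‖y‖ ^ r) := lintegral_mono_set hsub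
    _ ≤ ∑' k : ℕ, ∫⁻ y in A k, ENNReal.ofReal (‖y‖ ^ r) := lintegral_iUnion_le _ _
    _ ≤ ∑' k : ℕ, ENNReal.ofReal ((((2:ℝ) ^ (-r) + 1) * R ^ ((n:ℝ)+r)) * w ^ k) *
          volume (ball (0 : E) 1) := by
        refine ENNReal.tsum_le_tsum fun k => ?_
        have hterm := hl_annulus_bound (n := n) r (R * 2 ^ (-((k : ℝ) + 1)))
          (R * 2 ^ (-(k : ℝ))) (by positivity)
          (by
            have : (2:ℝ) ^ (-((k : ℝ) + 1)) ≤ 2 ^ (-(k : ℝ)) :=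
              Real.rpow_le_rpow_of_exponent_le one_le_two (by linarith)
            nlinarith)
        refine hterm.trans (le_of_eq ?_)
        rw [hl_term_arith k r (n:ℝ) R hR]
    _ = ENNReal.ofReal ((((2:ℝ) ^ (-r) + 1) * R ^ ((n:ℝ)+r)) * (1 - w)⁻¹) *
          volume (ball (0 : E) 1) := hl_geom_sum _ _ (by positivity) hw0.le hw1
    _ = _ := by
        congr 1
        congr 1
        unfold hlCb
        ring

lemma hl_lint_compl (r : ℝ) (hr : r < -(n : ℝ)) (R : ℝ) (hR : 0 < R) :
    ∫⁻ y in {y : E | R ≤ ‖y‖}, ENNReal.ofReal (‖y‖ ^ r) ≤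
    ENNReal.ofReal (hlCc n r * R ^ ((n : ℝ) + r)) * volume (ball (0 : E) 1) := by
  set w : ℝ := (2 : ℝ) ^ ((n : ℝ) + r) with hw
  have hw0 : 0 < w := Real.rpow_pos_of_pos two_pos _
  have hw1 : w < 1 := Real.rpow_lt_one_of_one_lt_of_neg one_lt_two (by linarith)
  set A : ℕ → Set (EuclideanSpace ℝ (Fin n)) := fun k =>
    {y | R * 2 ^ ((k : ℝ)) ≤ ‖y‖ ∧ ‖y‖ ≤ R * 2 ^ ((k : ℝ) + 1)} with hA
  have hsub : {y : E | R ≤ ‖y‖} ⊆ ⋃ k, A k := by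
    intro y hyR
    obtain ⟨k, hk1, hk2⟩ := hl_exists_scale (‖y‖ / R) ((one_le_div₀ hR).2 hyR)
    refine Set.mem_iUnion.2 ⟨k, ?_, ?_⟩
    · rw [← le_div_iff₀' hR]; exact hk1
    · rw [← div_le_iff₀' hR]; exact hk2
  calc ∫⁻ y in {y : E | R ≤ ‖y‖}, ENNReal.ofReal (‖y‖ ^ r)
      ≤ ∫⁻ y in ⋃ k, A k, ENNReal.ofReal (‖y‖ ^ r) := lintegral_mono_set hsub
    _ ≤ ∑' k : ℕ, ∫⁻ y in A k, ENNReal.ofReal (‖y‖ ^ r) := lintegral_iUnion_le _ _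
    _ ≤ ∑' k : ℕ, ENNReal.ofReal ((((1 + (2:ℝ) ^ r) * 2 ^ ((n:ℝ))) * R ^ ((n:ℝ)+r)) * w ^ k) *
          volume (ball (0 : E) 1) := by
        refine ENNReal.tsum_le_tsum fun k => ?_
        have hterm := hl_annulus_bound (n := n) r (R * 2 ^ ((k : ℝ)))
          (R * 2 ^ ((k : ℝ) + 1)) (by positivity)
          (by
            have : (2:ℝ) ^ ((k : ℝ)) ≤ 2 ^ ((k : ℝ) + 1) :=
              Real.rpow_le_rpow_of_exponent_le one_le_two (by linarith)
            nlinarith)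
        refine hterm.trans (le_of_eq ?_)
        rw [hl_term_arith' k r (n:ℝ) R hR]
    _ = ENNReal.ofReal ((((1 + (2:ℝ) ^ r) * 2 ^ ((n:ℝ))) * R ^ ((n:ℝ)+r)) * (1 - w)⁻¹) *
          volume (ball (0 : E) 1) := by
        have h3 : (0:ℝ) < 2 ^ r := Real.rpow_pos_of_pos two_pos _
        have h4 : (0:ℝ) < 2 ^ ((n:ℝ)) := Real.rpow_pos_of_pos two_pos _
        exact hl_geom_sum _ _ (by positivity) hw0.le hw1
    _ = _ := by
        congr 1
        congr 1
        unfold hlCc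
        ring

/-- The weight function. -/
noncomputable def hlF (q : ℝ) {n : ℕ} (z : EuclideanSpace ℝ (Fin n)) : ℝ :=
  (1 + ‖z‖ ^ 2) ^ (-q / 2)

lemma hlF_pos (q : ℝ) (z : E) : 0 < hlF q z :=
  Real.rpow_pos_of_pos (by positivity) _

lemma hlF_le_one (q : ℝ) (hq : 0 ≤ q) (z : E) : hlF q z ≤ 1 :=
  Real.rpow_le_one_of_one_le_of_nonpos (by nlinarith [sq_nonneg ‖z‖]) (by linarith)

lemma hlF_le (q : ℝ) (hq : 0 < q) (z : E) (hz : z ≠ 0) : hlF q z ≤ ‖z‖ ^ (-q) := by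
  have h0 : 0 < ‖z‖ := norm_pos_iff.2 hz
  have h1 : (‖z‖ ^ 2 : ℝ) ^ (-q / 2) = ‖z‖ ^ (-q) := by
    rw [← Real.rpow_natCast ‖z‖ 2, ← Real.rpow_mul (norm_nonneg _)]
    congr 1
    ring
  rw [← h1]
  exact Real.rpow_le_rpow_of_nonpos (by positivity) (by linarith) (by linarith)

lemma hl_rpow_diff (e m : ℝ) (hm : 0 < m) (he : e < 0) (u v : ℝ) (hu : m ≤ u) (hv : m ≤ v) :
    |u ^ e - v ^ e| ≤ |e| * m ^ (e - 1) * |u - v| := by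
  have hderiv : ∀ s ∈ Set.Ici m, HasDerivWithinAt (fun s : ℝ => s ^ e)
      (e * s ^ (e - 1)) (Set.Ici m) s := fun s hs =>
    (Real.hasDerivAt_rpow_const (Or.inl (hm.trans_le hs).ne')).hasDerivWithinAt
  have hbound : ∀ s ∈ Set.Ici m, ‖e * s ^ (e - 1)‖ ≤ |e| * m ^ (e - 1) := by
    intro s hs
    rw [Real.norm_eq_abs, abs_mul, abs_of_nonneg (Real.rpow_nonneg (hm.trans_le hs).le _)]
    exact mul_le_mul_of_nonneg_left
      (Real.rpow_le_rpow_of_nonpos hm hs (by linarith)) (abs_nonneg e)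
  have h := Convex.norm_image_sub_le_of_norm_hasDerivWithin_le hderiv hbound
    (convex_Ici m) hv hu
  simpa [Real.norm_eq_abs] using h

lemma hl_lower (x w : E) (hw : ‖w‖ ≤ (1 + ‖x‖ ^ 2) ^ ((1:ℝ)/2) / 2) :
    (1 + ‖x‖ ^ 2) / 4 ≤ 1 + ‖x + w‖ ^ 2 := by
  have h1 : ‖x‖ ≤ ‖x + w‖ + ‖w‖ := by
    calc ‖x‖ = ‖(x + w) - w‖ := by rw [add_sub_cancel_right]
    _ ≤ ‖x + w‖ + ‖w‖ := norm_sub_le _ _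
  have h2 : ‖w‖ ^ 2 ≤ (1 + ‖x‖ ^ 2) / 4 := by
    have hs : ((1 + ‖x‖ ^ 2 : ℝ) ^ ((1:ℝ)/2)) ^ 2 = 1 + ‖x‖ ^ 2 := by
      rw [← Real.rpow_natCast ((1 + ‖x‖ ^ 2 : ℝ) ^ ((1:ℝ)/2)) 2,
        ← Real.rpow_mul (by positivity)]
      norm_num
    have := pow_le_pow_left₀ (norm_nonneg w) hw 2
    rw [div_pow, hs] at this
    linarith
  have h3 : ‖x‖ ^ 2 ≤ (‖x + w‖ + ‖w‖) ^ 2 := pow_le_pow_left₀ (norm_nonneg x) h1 2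
  nlinarith [sq_nonneg (‖x + w‖ - ‖w‖), norm_nonneg (x + w), norm_nonneg w]

/-- Constant in the symmetric second-difference estimate. -/
noncomputable def hlCq (q : ℝ) : ℝ :=
  (q / 2) * (8 * (q / 2 + 1) * (4:ℝ) ^ (q / 2 + 2) + 4 * (4:ℝ) ^ (q / 2 + 1))

lemma hlCq_pos (q : ℝ) (hq : 0 < q) : 0 < hlCq q := by
  have h1 : (0:ℝ) < (4:ℝ) ^ (q / 2 + 2) := Real.rpow_pos_of_pos (by norm_num) _
  have h2 : (0:ℝ) < (4:ℝ) ^ (q / 2 + 1) := Real.rpow_pos_of_pos (by norm_num) _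
  have : (0:ℝ) < q / 2 + 1 := by linarith
  unfold hlCq
  positivity

lemma hl_symdiff (q : ℝ) (hq0 : 0 < q) (x y : E)
    (hy : ‖y‖ ≤ (1 + ‖x‖ ^ 2) ^ ((1:ℝ)/2) / 2) :
    |hlF q (x + y) + hlF q (x - y) - 2 * hlF q x| ≤
      hlCq q * ((1 + ‖x‖ ^ 2) ^ (-q / 2 - 1)) * ‖y‖ ^ 2 := by
  set σ : ℝ := 1 + ‖x‖ ^ 2 with hσdef
  have hσ1 : 1 ≤ σ := by nlinarith [sq_nonneg ‖x‖]
  have hσ0 : 0 < σ := by linarith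
  set b : ℝ := 2 * (inner ℝ x y : ℝ) with hbdef
  set c : ℝ := ‖y‖ ^ 2 with hcdef
  have hc0 : 0 ≤ c := sq_nonneg _
  set e : ℝ := -q / 2 - 1 with hedef
  have he0 : e < 0 := by rw [hedef]; linarith
  set m : ℝ := σ / 4 with hmdef
  have hm0 : 0 < m := by positivity
  set P : ℝ → ℝ := fun t => σ + b * t + c * t ^ 2 with hPdef
  set Pm : ℝ → ℝ := fun t => σ - b * t + c * t ^ 2 with hPmdef
  have hPval : ∀ t : ℝ, P t = 1 + ‖x + t • y‖ ^ 2 := by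
    intro t
    rw [norm_add_sq_real, real_inner_smul_right, norm_smul, Real.norm_eq_abs, mul_pow, sq_abs]
    simp only [hPdef, hσdef, hbdef, hcdef]
    ring
  have hPmval : ∀ t : ℝ, Pm t = 1 + ‖x + (-t) • y‖ ^ 2 := by
    intro t
    rw [norm_add_sq_real, real_inner_smul_right, norm_smul, Real.norm_eq_abs, mul_pow, sq_abs]
    simp only [hPmdef, hσdef, hbdef, hcdef]
    ring
  have hPm_lb : ∀ t ∈ Set.Icc (0:ℝ) 1, m ≤ P t ∧ m ≤ Pm t := by
    intro t ht
    have hty : ∀ s : ℝ, |s| ≤ 1 → ‖s • y‖ ≤ σ ^ ((1:ℝ)/2) / 2 := by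
      intro s hs
      rw [norm_smul, Real.norm_eq_abs]
      calc |s| * ‖y‖ ≤ 1 * ‖y‖ := mul_le_mul_of_nonneg_right hs (norm_nonneg _)
      _ = ‖y‖ := one_mul _
      _ ≤ σ ^ ((1:ℝ)/2) / 2 := hy
    have habs : |t| ≤ 1 := by rw [abs_of_nonneg ht.1]; exact ht.2
    have habs' : |(-t)| ≤ 1 := by rwa [abs_neg]
    constructor
    · rw [hPval t]; exact hl_lower x (t • y) (hty t habs)
    · rw [hPmval t]; exact hl_lower x ((-t) • y) (hty (-t) habs')
  have hPpos : ∀ t ∈ Set.Icc (0:ℝ) 1, 0 < P t := fun t ht => hm0.trans_le (hPm_lb t ht).1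
  have hPmpos : ∀ t ∈ Set.Icc (0:ℝ) 1, 0 < Pm t := fun t ht => hm0.trans_le (hPm_lb t ht).2
  set ψ : ℝ → ℝ := fun t => P t ^ (-q/2) + Pm t ^ (-q/2) with hψdef
  set ψ' : ℝ → ℝ := fun t =>
    (-q/2) * P t ^ (-q/2 - 1) * (b + 2 * c * t) +
    (-q/2) * Pm t ^ (-q/2 - 1) * (-b + 2 * c * t) with hψ'def
  have hds : ∀ t ∈ Set.Icc (0:ℝ) 1, HasDerivWithinAt ψ (ψ' t) (Set.Icc (0:ℝ) 1) t := by
    intro t ht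
    have h1 : HasDerivAt P (b + 2 * c * t) t := by
      have h : HasDerivAt P (b * 1 + c * ((2:ℕ) * t ^ (2 - 1))) t :=
        (((hasDerivAt_id t).const_mul b).const_add σ).add
          ((hasDerivAt_pow 2 t).const_mul c)
      convert h using 1
      push_cast
      ring
    have h1m : HasDerivAt Pm (-b + 2 * c * t) t := by
      have h : HasDerivAt (fun s : ℝ => σ + -b * s + c * s ^ 2)
          (-b * 1 + c * ((2:ℕ) * t ^ (2 - 1))) t :=
        (((hasDerivAt_id t).const_mul (-b)).const_add σ).add
          ((hasDerivAt_pow 2 t).const_mul c)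
      have h2 : Pm = fun s : ℝ => σ + -b * s + c * s ^ 2 := by
        rw [hPmdef]
        ext s
        ring
      rw [h2]
      convert h using 1
      push_cast
      ring
    have h2 : HasDerivAt (fun s : ℝ => s ^ (-q/2)) ((-q/2) * (P t) ^ (-q/2 - 1)) (P t) :=
      Real.hasDerivAt_rpow_const (Or.inl (hPpos t ht).ne')
    have h2m : HasDerivAt (fun s : ℝ => s ^ (-q/2)) ((-q/2) * (Pm t) ^ (-q/2 - 1)) (Pm t) :=
      Real.hasDerivAt_rpow_const (Or.inl (hPmpos t ht).ne')
    exact ((h2.comp t h1).add (h2m.comp t h1m)).hasDerivWithinAt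
  have hbsq : b ^ 2 ≤ 4 * σ * c := by
    have h := abs_real_inner_le_norm x y
    have h2 : |(inner ℝ x y : ℝ)| ^ 2 ≤ (‖x‖ * ‖y‖) ^ 2 :=
      pow_le_pow_left₀ (abs_nonneg _) h 2
    rw [sq_abs] at h2
    simp only [hbdef, hcdef, hσdef]
    nlinarith [sq_nonneg ‖x‖, sq_nonneg ‖y‖]
  have habsE : |e| = q / 2 + 1 := by rw [abs_of_neg he0, hedef]; ring
  have hm1 : m ^ (e - 1) = σ ^ (e - 1) * (4:ℝ) ^ (q/2 + 2) := by
    rw [hmdef, Real.div_rpow hσ0.le (by norm_num), div_eq_mul_inv,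
      ← Real.rpow_neg (by norm_num : (0:ℝ) ≤ 4)]
    congr 1
    rw [hedef]; ring
  have hm2 : m ^ e = σ ^ e * (4:ℝ) ^ (q/2 + 1) := by
    rw [hmdef, Real.div_rpow hσ0.le (by norm_num), div_eq_mul_inv,
      ← Real.rpow_neg (by norm_num : (0:ℝ) ≤ 4)]
    congr 1
    rw [hedef]; ring
  have hσe : σ * σ ^ (e - 1) = σ ^ e := by
    conv_rhs => rw [show e = 1 + (e - 1) from by ring]
    rw [Real.rpow_add hσ0, Real.rpow_one]
  have hC : ∀ t ∈ Set.Icc (0:ℝ) 1, ‖ψ' t‖ ≤ hlCq q * σ ^ e * c := by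
    intro t ht
    obtain ⟨hP1, hP2⟩ := hPm_lb t ht
    have hmp1 : 0 < m ^ (e - 1) := Real.rpow_pos_of_pos hm0 _
    have hmp2 : 0 < m ^ e := Real.rpow_pos_of_pos hm0 _
    have hdiff : |P t ^ e - Pm t ^ e| ≤ |e| * m ^ (e - 1) * (2 * |b| * t) := by
      have h := hl_rpow_diff e m hm0 he0 (P t) (Pm t) hP1 hP2
      have habs : |P t - Pm t| = 2 * |b| * t := by
        have h2 : P t - Pm t = 2 * b * t := by simp only [hPdef, hPmdef]; ring
        rw [h2, abs_mul, abs_mul, abs_of_nonneg ht.1]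
        norm_num
      rwa [habs] at h
    have hup : P t ^ e ≤ m ^ e := Real.rpow_le_rpow_of_nonpos hm0 hP1 he0.le
    have hup2 : Pm t ^ e ≤ m ^ e := Real.rpow_le_rpow_of_nonpos hm0 hP2 he0.le
    have hlo : 0 < P t ^ e := Real.rpow_pos_of_pos (hm0.trans_le hP1) _
    have hlo2 : 0 < Pm t ^ e := Real.rpow_pos_of_pos (hm0.trans_le hP2) _
    have hre : ψ' t = (-q/2) *
        (b * (P t ^ e - Pm t ^ e) + 2 * c * t * (P t ^ e + Pm t ^ e)) := by
      simp only [hψ'def, hedef]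
      ring
    rw [Real.norm_eq_abs, hre, abs_mul]
    have h1 : |(-q/2 : ℝ)| = q / 2 := by rw [abs_of_nonpos (by linarith)]; ring
    rw [h1]
    have h2 : |b * (P t ^ e - Pm t ^ e) + 2 * c * t * (P t ^ e + Pm t ^ e)|
        ≤ |b| * (|e| * m ^ (e - 1) * (2 * |b|)) + 2 * c * (2 * m ^ e) := by
      calc |b * (P t ^ e - Pm t ^ e) + 2 * c * t * (P t ^ e + Pm t ^ e)|
          ≤ |b * (P t ^ e - Pm t ^ e)| + |2 * c * t * (P t ^ e + Pm t ^ e)| := abs_add_le _ _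
        _ ≤ |b| * (|e| * m ^ (e - 1) * (2 * |b|)) + 2 * c * (2 * m ^ e) := by
            refine add_le_add ?_ ?_
            · rw [abs_mul]
              refine (mul_le_mul_of_nonneg_left hdiff (abs_nonneg b)).trans ?_
              have : |e| * m ^ (e - 1) * (2 * |b| * t) ≤ |e| * m ^ (e - 1) * (2 * |b|) := by
                have h3 : 2 * |b| * t ≤ 2 * |b| * 1 := by
                  apply mul_le_mul_of_nonneg_left ht.2 (by positivity)
                rw [mul_one] at h3
                exact mul_le_mul_of_nonneg_left h3 (mul_nonneg (abs_nonneg e) hmp1.le)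
              exact mul_le_mul_of_nonneg_left this (abs_nonneg b)
            · rw [abs_mul, abs_of_nonneg (mul_nonneg (by positivity) ht.1),
                abs_of_nonneg (add_pos hlo hlo2).le]
              calc 2 * c * t * (P t ^ e + Pm t ^ e)
                  ≤ 2 * c * 1 * (P t ^ e + Pm t ^ e) := by
                    apply mul_le_mul_of_nonneg_right _ (add_pos hlo hlo2).le
                    exact mul_le_mul_of_nonneg_left ht.2 (by positivity)
                _ ≤ 2 * c * 1 * (2 * m ^ e) := by
                    apply mul_le_mul_of_nonneg_left (by linarith) (by positivity)
                _ = 2 * c * (2 * m ^ e) := by ring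
    refine (mul_le_mul_of_nonneg_left h2 (by positivity : (0:ℝ) ≤ q/2)).trans ?_
    calc q/2 * (|b| * (|e| * m ^ (e - 1) * (2 * |b|)) + 2 * c * (2 * m ^ e))
        = q/2 * (2 * (q/2 + 1) * b ^ 2 * m ^ (e - 1) + 4 * c * m ^ e) := by
          rw [habsE, ← sq_abs b]; ring
      _ ≤ q/2 * (2 * (q/2 + 1) * (4 * σ * c) * m ^ (e - 1) + 4 * c * m ^ e) := by
          have : 2 * (q/2 + 1) * b ^ 2 * m ^ (e - 1)
              ≤ 2 * (q/2 + 1) * (4 * σ * c) * m ^ (e - 1) := by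
            apply mul_le_mul_of_nonneg_right _ hmp1.le
            apply mul_le_mul_of_nonneg_left hbsq (by linarith)
          apply mul_le_mul_of_nonneg_left (by linarith) (by linarith)
      _ = hlCq q * σ ^ e * c := by
          rw [hm1, hm2]
          simp only [hlCq]
          linear_combination (4 * q * (q/2 + 1) * c * (4:ℝ) ^ (q/2 + 2)) * hσe
  have hMVT := Convex.norm_image_sub_le_of_norm_hasDerivWithin_le hds hC
    (convex_Icc 0 1) (Set.mem_Icc.2 ⟨le_refl 0, zero_le_one⟩)
    (Set.mem_Icc.2 ⟨zero_le_one, le_refl 1⟩)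
  have hψ1 : ψ 1 = hlF q (x + y) + hlF q (x - y) := by
    simp only [hψdef]
    rw [hPval 1, hPmval 1]
    simp only [one_smul, neg_smul]
    rw [← sub_eq_add_neg]
    rfl
  have hψ0 : ψ 0 = 2 * hlF q x := by
    have hP0 : P 0 = σ := by simp [hPdef]
    have hPm0 : Pm 0 = σ := by simp [hPmdef]
    simp only [hψdef, hP0, hPm0]
    rw [hσdef]
    unfold hlF
    ring
  rw [hψ1, hψ0] at hMVT
  have : ‖(1:ℝ) - 0‖ = 1 := by norm_num
  rw [this, mul_one] at hMVT
  calc |hlF q (x + y) + hlF q (x - y) - 2 * hlF q x|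
      ≤ hlCq q * σ ^ e * c := by
        rw [← Real.norm_eq_abs]
        exact hMVT
    _ = hlCq q * σ ^ (-q/2 - 1) * ‖y‖ ^ 2 := by rw [hedef, hcdef]
lemma hl_cont (q : ℝ) : Continuous (fun z : E => hlF q z) := by
  apply Continuous.rpow_const
  · exact continuous_const.add (continuous_norm.pow 2)
  · intro z
    left
    positivity

lemma hl_meas_norm_rpow (r : ℝ) : Measurable (fun y : E => ‖y‖ ^ r) :=
  by fun_prop

/-- integrals over symmetric sets are invariant under `y ↦ -y` (Bochner). -/
lemma hl_setint_neg (s : Set (EuclideanSpace ℝ (Fin n))) (hs : MeasurableSet s)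
    (hsym : ∀ y : EuclideanSpace ℝ (Fin n), -y ∈ s ↔ y ∈ s) (F : EuclideanSpace ℝ (Fin n) → ℝ) :
    ∫ y in s, F (-y) = ∫ y in s, F y := by
  have mp0 : MeasurePreserving (fun y : EuclideanSpace ℝ (Fin n) => -y)
      (volume : Measure (EuclideanSpace ℝ (Fin n))) volume :=
    Measure.measurePreserving_neg _
  have hpre : ((fun y : EuclideanSpace ℝ (Fin n) => -y) ⁻¹' s) = s := by
    ext y; exact hsym y
  have mp : MeasurePreserving (fun y : EuclideanSpace ℝ (Fin n) => -y)
      (volume.restrict s) (volume.restrict s) := by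
    have h := mp0.restrict_preimage (s := s) hs
    rwa [hpre] at h
  exact mp.integral_comp (MeasurableEquiv.neg (EuclideanSpace ℝ (Fin n))).measurableEmbedding F

/-- lintegral version. -/
lemma hl_setlint_neg (s : Set (EuclideanSpace ℝ (Fin n))) (hs : MeasurableSet s)
    (hsym : ∀ y : EuclideanSpace ℝ (Fin n), -y ∈ s ↔ y ∈ s)
    (F : EuclideanSpace ℝ (Fin n) → ENNReal) :
    ∫⁻ y in s, F (-y) = ∫⁻ y in s, F y := by
  have mp0 : MeasurePreserving (fun y : EuclideanSpace ℝ (Fin n) => -y)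
      (volume : Measure (EuclideanSpace ℝ (Fin n))) volume :=
    Measure.measurePreserving_neg _
  have hpre : ((fun y : EuclideanSpace ℝ (Fin n) => -y) ⁻¹' s) = s := by
    ext y; exact hsym y
  have mp : MeasurePreserving (fun y : EuclideanSpace ℝ (Fin n) => -y)
      (volume.restrict s) (volume.restrict s) := by
    have h := mp0.restrict_preimage (s := s) hs
    rwa [hpre] at h
  exact mp.lintegral_comp_emb
    (MeasurableEquiv.neg (EuclideanSpace ℝ (Fin n))).measurableEmbedding F

/-- translation for set lintegrals. -/
lemma hl_lint_translate (G : EuclideanSpace ℝ (Fin n) → ENNReal) (x : EuclideanSpace ℝ (Fin n))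
    (c : ℝ) :
    ∫⁻ y in {y : E | ‖y‖ ≤ c}, G (x + y) = ∫⁻ z in {z : E | ‖z - x‖ ≤ c}, G z := by
  have hs : MeasurableSet {z : E | ‖z - x‖ ≤ c} := by
    have : {z : E | ‖z - x‖ ≤ c} = (fun z : E => ‖z - x‖) ⁻¹' (Set.Iic c) := rfl
    rw [this]
    exact ((measurable_id.sub measurable_const).norm) measurableSet_Iic
  have hpre : ((fun y : EuclideanSpace ℝ (Fin n) => x + y) ⁻¹' {z : E | ‖z - x‖ ≤ c})
      = {y : E | ‖y‖ ≤ c} := by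
    ext y
    simp [add_sub_cancel_left]
  have mp : MeasurePreserving (fun y : EuclideanSpace ℝ (Fin n) => x + y)
      (volume.restrict {y : E | ‖y‖ ≤ c}) (volume.restrict {z : E | ‖z - x‖ ≤ c}) := by
    have h := (measurePreserving_add_left
      (volume : Measure (EuclideanSpace ℝ (Fin n))) x).restrict_preimage (s := _) hs
    rwa [hpre] at h
  exact mp.lintegral_comp_emb (MeasurableEquiv.addLeft x).measurableEmbedding G

lemma hl_integrableOn_of_lint {g : EuclideanSpace ℝ (Fin n) → ℝ}
    {s : Set (EuclideanSpace ℝ (Fin n))} (hg : Measurable g)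
    (h : ∫⁻ y in s, ENNReal.ofReal |g y| < ⊤) : IntegrableOn g s := by
  refine ⟨hg.aestronglyMeasurable, ?_⟩
  rw [hasFiniteIntegral_iff_norm]
  simpa [Real.norm_eq_abs] using h

lemma hl_abs_integral_le {g : EuclideanSpace ℝ (Fin n) → ℝ}
    {s : Set (EuclideanSpace ℝ (Fin n))} (hg : Measurable g) :
    |∫ y in s, g y| ≤ (∫⁻ y in s, ENNReal.ofReal |g y|).toReal := by
  have h1 : |∫ y in s, g y| ≤ ∫ y in s, |g y| := by
    simpa [Real.norm_eq_abs] using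
      norm_integral_le_integral_norm (μ := volume.restrict s) g
  have h2 : ∫ y in s, |g y| = (∫⁻ y in s, ENNReal.ofReal |g y|).toReal :=
    integral_eq_lintegral_of_nonneg_ae (Filter.Eventually.of_forall fun y => abs_nonneg _)
      hg.abs.aestronglyMeasurable
  linarith

noncomputable def hlI (q : ℝ) {n : ℕ} (x y : EuclideanSpace ℝ (Fin n)) : ℝ :=
  (hlF q x - hlF q (x + y)) / ‖y‖ ^ (n + 1)

noncomputable def hlG (q : ℝ) {n : ℕ} (x y : EuclideanSpace ℝ (Fin n)) : ℝ :=
  (2 * hlF q x - hlF q (x + y) - hlF q (x - y)) / (2 * ‖y‖ ^ (n + 1))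

lemma hlI_meas (q : ℝ) (x : E) : Measurable (fun y : E => hlI q x y) := by
  apply Measurable.div
  · exact (measurable_const.sub
      (((hl_cont q).comp (continuous_const.add continuous_id)).measurable))
  · exact (measurable_norm.pow_const _)

lemma hlG_meas (q : ℝ) (x : E) : Measurable (fun y : E => hlG q x y) := by
  apply Measurable.div
  · exact ((measurable_const.sub
      (((hl_cont q).comp (continuous_const.add continuous_id)).measurable)).sub
      (((hl_cont q).comp (continuous_const.sub continuous_id)).measurable))
  · exact (measurable_const.mul (measurable_norm.pow_const _))

lemma hlG_eq (q : ℝ) (x y : E) : hlG q x y = (hlI q x y + hlI q x (-y)) / 2 := by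
  unfold hlG hlI
  rw [norm_neg, ← sub_eq_add_neg, ← add_div, div_div]
  congr 1
  · ring
  · ring

lemma hl_npow_eq (y : E) : (‖y‖ ^ (n + 1) : ℝ) = ‖y‖ ^ ((n : ℝ) + 1) := by
  rw [← Real.rpow_natCast ‖y‖ (n + 1)]
  push_cast
  ring_nf

lemma hl_sq_rt (t : ℝ) (ht : 0 ≤ t) : (t ^ 2) ^ ((1:ℝ)/2) = t := by
  rw [← Real.rpow_natCast t 2, ← Real.rpow_mul ht]
  norm_num

lemma hl_norm_le_s (x : E) : ‖x‖ ≤ (1 + ‖x‖ ^ 2) ^ ((1:ℝ)/2) := by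
  conv_lhs => rw [← hl_sq_rt ‖x‖ (norm_nonneg x)]
  exact Real.rpow_le_rpow (by positivity) (by nlinarith) (by norm_num)

lemma hl_one_le_s (x : E) : 1 ≤ (1 + ‖x‖ ^ 2) ^ ((1:ℝ)/2) := by
  conv_lhs => rw [show (1:ℝ) = (1:ℝ) ^ ((1:ℝ)/2) from (Real.one_rpow _).symm]
  exact Real.rpow_le_rpow (by norm_num) (by nlinarith [sq_nonneg ‖x‖]) (by norm_num)

lemma hlG_near (q : ℝ) (hq0 : 0 < q) (x y : E)
    (hy : ‖y‖ ≤ (1 + ‖x‖ ^ 2) ^ ((1:ℝ)/2) / 2) :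
    |hlG q x y| ≤ hlCq q * (1 + ‖x‖ ^ 2) ^ (-q/2 - 1) * ‖y‖ ^ ((1:ℝ) - n) := by
  have hC : 0 < hlCq q := hlCq_pos q hq0
  have hσp : (0:ℝ) < (1 + ‖x‖ ^ 2) ^ (-q/2 - 1) := Real.rpow_pos_of_pos (by positivity) _
  rcases eq_or_ne y 0 with rfl | hy0
  · have hnum : 2 * hlF q x - hlF q (x + 0) - hlF q (x - 0) = 0 := by
      rw [add_zero, sub_zero]; ring
    unfold hlG
    rw [hnum, zero_div, abs_zero]
    have : (0:ℝ) ≤ ‖(0 : EuclideanSpace ℝ (Fin n))‖ ^ ((1:ℝ) - n) :=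
      Real.rpow_nonneg (norm_nonneg _) _
    positivity
  · have h0 : 0 < ‖y‖ := norm_pos_iff.2 hy0
    have hd : (0:ℝ) < 2 * ‖y‖ ^ (n + 1) := by positivity
    unfold hlG
    rw [abs_div, abs_of_pos hd]
    have hnum : |2 * hlF q x - hlF q (x + y) - hlF q (x - y)| ≤
        hlCq q * (1 + ‖x‖ ^ 2) ^ (-q/2 - 1) * ‖y‖ ^ 2 := by
      have heq : 2 * hlF q x - hlF q (x + y) - hlF q (x - y)
          = -(hlF q (x + y) + hlF q (x - y) - 2 * hlF q x) := by ring
      rw [heq, abs_neg]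
      exact hl_symdiff q hq0 x y hy
    calc |2 * hlF q x - hlF q (x + y) - hlF q (x - y)| / (2 * ‖y‖ ^ (n + 1))
        ≤ (hlCq q * (1 + ‖x‖ ^ 2) ^ (-q/2 - 1) * ‖y‖ ^ 2) / (2 * ‖y‖ ^ (n + 1)) := by
          gcongr
      _ = (hlCq q * (1 + ‖x‖ ^ 2) ^ (-q/2 - 1)) * (‖y‖ ^ 2 / (2 * ‖y‖ ^ (n + 1))) := by
          ring
      _ ≤ hlCq q * (1 + ‖x‖ ^ 2) ^ (-q/2 - 1) * ‖y‖ ^ ((1:ℝ) - n) := by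
          apply mul_le_mul_of_nonneg_left _ (by positivity)
          have he : ‖y‖ ^ 2 / (2 * ‖y‖ ^ (n + 1)) = (1/2) * ‖y‖ ^ ((1:ℝ) - n) := by
            have hne : (‖y‖ : ℝ) ^ ((n:ℝ) + 1) ≠ 0 := (Real.rpow_pos_of_pos h0 _).ne'
            have key : (‖y‖:ℝ) ^ ((2:ℕ):ℝ) = ‖y‖ ^ ((1:ℝ) - n) * ‖y‖ ^ ((n:ℝ) + 1) := by
              rw [← Real.rpow_add h0]
              congr 1
              push_cast
              ring
            rw [hl_npow_eq, ← Real.rpow_natCast ‖y‖ 2, key]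
            field_simp
          rw [he]
          have hnn : (0:ℝ) ≤ ‖y‖ ^ ((1:ℝ) - n) := Real.rpow_nonneg (norm_nonneg _) _
          linarith

lemma hlG_far (q : ℝ) (hq0 : 0 < q) (x y : E) (hy0 : y ≠ 0) :
    |hlG q x y| ≤ (hlF q x + (hlF q (x + y) + hlF q (x - y)) / 2) * ‖y‖ ^ (-((n:ℝ) + 1)) := by
  have h0 : 0 < ‖y‖ := norm_pos_iff.2 hy0
  have hd : (0:ℝ) < 2 * ‖y‖ ^ (n + 1) := by positivity
  have hfx := hlF_pos q x
  have hfu := hlF_pos q (x + y)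
  have hfv := hlF_pos q (x - y)
  unfold hlG
  rw [abs_div, abs_of_pos hd]
  have hnum : |2 * hlF q x - hlF q (x + y) - hlF q (x - y)| ≤
      2 * hlF q x + hlF q (x + y) + hlF q (x - y) := by
    rw [abs_le]
    constructor <;> nlinarith
  calc |2 * hlF q x - hlF q (x + y) - hlF q (x - y)| / (2 * ‖y‖ ^ (n + 1))
      ≤ (2 * hlF q x + hlF q (x + y) + hlF q (x - y)) / (2 * ‖y‖ ^ (n + 1)) := by gcongr
    _ = (hlF q x + (hlF q (x + y) + hlF q (x - y)) / 2) * ‖y‖ ^ (-((n:ℝ) + 1)) := by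
        rw [hl_npow_eq, Real.rpow_neg (norm_nonneg y)]
        have hne : (‖y‖ : ℝ) ^ ((n:ℝ) + 1) ≠ 0 := (Real.rpow_pos_of_pos h0 _).ne'
        field_simp
        ring

noncomputable def hlCs1 (n : ℕ) (q : ℝ) : ℝ :=
  (2:ℝ) ^ ((n:ℝ) + 1) * (5:ℝ) ^ ((n:ℝ) - q) * hlCb n (-q)

noncomputable def hlCs2 (n : ℕ) (q : ℝ) : ℝ :=
  (3/4:ℝ) ^ (-q) * ((4:ℝ) ^ (-(q+1)) * hlCc n (-q - ((n:ℝ) + 1)))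

lemma hl_meas_le (c : ℝ) : MeasurableSet {y : E | ‖y‖ ≤ c} := by
  have : {y : E | ‖y‖ ≤ c} = (fun y : E => ‖y‖) ⁻¹' (Set.Iic c) := rfl
  rw [this]; exact measurable_norm measurableSet_Iic

lemma hl_meas_ge (c : ℝ) : MeasurableSet {y : E | c ≤ ‖y‖} := by
  have : {y : E | c ≤ ‖y‖} = (fun y : E => ‖y‖) ⁻¹' (Set.Ici c) := rfl
  rw [this]; exact measurable_norm measurableSet_Ici

lemma hl_ae_ne_zero (hn : 1 ≤ n) :
    ∀ᵐ z : EuclideanSpace ℝ (Fin n) ∂volume, z ≠ 0 := by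
  haveI : Nonempty (Fin n) := ⟨⟨0, hn⟩⟩
  haveI : Nontrivial (EuclideanSpace ℝ (Fin n)) := inferInstance
  have hset : {a : EuclideanSpace ℝ (Fin n) | ¬ a ≠ 0} = {0} := by ext a; simp
  rw [ae_iff, hset]
  exact measure_singleton 0

lemma hl_far_piece (hn : 1 ≤ n) (q : ℝ) (hq0 : 0 < q) (hqn : q < n) (x : E) :
    ∫⁻ y in {y : E | (1 + ‖x‖ ^ 2) ^ ((1:ℝ)/2) / 2 ≤ ‖y‖},
      ENNReal.ofReal (hlF q (x + y) * ‖y‖ ^ (-((n:ℝ) + 1))) ≤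
    ENNReal.ofReal ((hlCs1 n q + hlCs2 n q) * (1 + ‖x‖ ^ 2) ^ (-(q+1)/2)) *
      volume (ball (0 : E) 1) := by
  set σ : ℝ := 1 + ‖x‖ ^ 2 with hσdef
  have hσ0 : 0 < σ := by positivity
  set s : ℝ := σ ^ ((1:ℝ)/2) with hsdef
  have hs1 : 1 ≤ s := hl_one_le_s x
  have hs0 : 0 < s := by linarith
  have hxs : ‖x‖ ≤ s := hl_norm_le_s x
  set R : ℝ := s / 2 with hRdef
  have hR0 : 0 < R := by positivity
  -- subdivision
  have hsub : {y : E | R ≤ ‖y‖} ⊆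
      ({y : E | R ≤ ‖y‖} ∩ {y : E | ‖y‖ ≤ 4 * s}) ∪ {y : E | 4 * s ≤ ‖y‖} := by
    intro y hy
    rcases le_total ‖y‖ (4 * s) with h | h
    · exact Or.inl ⟨hy, h⟩
    · exact Or.inr h
  refine le_trans (lintegral_mono_set hsub) ?_
  refine le_trans (lintegral_union_le _ _ _) ?_
  have hmeas1 : MeasurableSet ({y : E | R ≤ ‖y‖} ∩ {y : E | ‖y‖ ≤ 4 * s}) :=
    (hl_meas_ge R).inter (hl_meas_le (4 * s))
  -- Piece 1
  have hpiece1 : ∫⁻ y in ({y : E | R ≤ ‖y‖} ∩ {y : E | ‖y‖ ≤ 4 * s}),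
      ENNReal.ofReal (hlF q (x + y) * ‖y‖ ^ (-((n:ℝ) + 1))) ≤
      ENNReal.ofReal (hlCs1 n q * σ ^ (-(q+1)/2)) * volume (ball (0 : E) 1) := by
    have hpt : ∀ y ∈ ({y : E | R ≤ ‖y‖} ∩ {y : E | ‖y‖ ≤ 4 * s}),
        ENNReal.ofReal (hlF q (x + y) * ‖y‖ ^ (-((n:ℝ) + 1))) ≤
        ENNReal.ofReal (R ^ (-((n:ℝ) + 1)) * hlF q (x + y)) := by
      rintro y ⟨hy1, _⟩
      apply ENNReal.ofReal_le_ofReal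
      rw [mul_comm]
      apply mul_le_mul_of_nonneg_right _ (hlF_pos q (x + y)).le
      exact Real.rpow_le_rpow_of_nonpos hR0 hy1 (by push_cast; linarith)
    refine le_trans (setLIntegral_mono' hmeas1 hpt) ?_
    have hconst : ∀ y : E, ENNReal.ofReal (R ^ (-((n:ℝ) + 1)) * hlF q (x + y))
        = ENNReal.ofReal (R ^ (-((n:ℝ) + 1))) * ENNReal.ofReal (hlF q (x + y)) := fun y =>
      ENNReal.ofReal_mul (Real.rpow_nonneg hR0.le _)
    simp_rw [hconst]
    rw [lintegral_const_mul' _ _ ENNReal.ofReal_ne_top]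
    have hinner : ∫⁻ y in ({y : E | R ≤ ‖y‖} ∩ {y : E | ‖y‖ ≤ 4 * s}),
        ENNReal.ofReal (hlF q (x + y)) ≤
        ENNReal.ofReal (hlCb n (-q) * (5 * s) ^ ((n:ℝ) + (-q))) * volume (ball (0 : E) 1) := by
      refine le_trans (lintegral_mono_set Set.inter_subset_right) ?_
      rw [hl_lint_translate (fun z => ENNReal.ofReal (hlF q z)) x (4 * s)]
      have hsub2 : {z : E | ‖z - x‖ ≤ 4 * s} ⊆ {z : E | ‖z‖ ≤ 5 * s} := by
        intro z hz
        have : ‖z‖ ≤ ‖z - x‖ + ‖x‖ := by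
          calc ‖z‖ = ‖(z - x) + x‖ := by rw [sub_add_cancel]
          _ ≤ ‖z - x‖ + ‖x‖ := norm_add_le _ _
        simp only [Set.mem_setOf_eq] at hz ⊢
        linarith
      refine le_trans (lintegral_mono_set hsub2) ?_
      have hae : ∀ᵐ z : EuclideanSpace ℝ (Fin n) ∂(volume.restrict {z : E | ‖z‖ ≤ 5 * s}),
          ENNReal.ofReal (hlF q z) ≤ ENNReal.ofReal (‖z‖ ^ (-q)) := by
        refine (ae_restrict_of_ae (hl_ae_ne_zero hn)).mono fun z hz => ?_
        exact ENNReal.ofReal_le_ofReal (hlF_le q hq0 z hz)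
      refine le_trans (lintegral_mono_ae hae) ?_
      exact hl_lint_ball (n := n) hn (-q) (by push_cast; linarith) (5 * s) (by positivity)
    refine le_trans (mul_le_mul_right hinner _) ?_
    rw [← mul_assoc, ← ENNReal.ofReal_mul (Real.rpow_nonneg hR0.le _)]
    apply mul_le_mul_left
    apply ENNReal.ofReal_le_ofReal
    apply le_of_eq
    have e1 : R ^ (-((n:ℝ) + 1)) = (2:ℝ) ^ ((n:ℝ) + 1) * s ^ (-((n:ℝ) + 1)) := by
      rw [hRdef, Real.div_rpow hs0.le (by norm_num : (0:ℝ) ≤ 2), div_eq_mul_inv,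
        ← Real.rpow_neg (by norm_num : (0:ℝ) ≤ 2), neg_neg]
      ring
    have e2 : ((5:ℝ) * s) ^ ((n:ℝ) + (-q)) = 5 ^ ((n:ℝ) - q) * s ^ ((n:ℝ) - q) := by
      rw [Real.mul_rpow (by norm_num) hs0.le,
        show (n:ℝ) + -q = (n:ℝ) - q from by ring]
    have e3 : s ^ (-((n:ℝ) + 1)) * s ^ ((n:ℝ) - q) = σ ^ (-(q+1)/2) := by
      rw [← Real.rpow_add hs0, hsdef, ← Real.rpow_mul hσ0.le]
      congr 1
      ring
    rw [e1, e2]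
    calc (2:ℝ) ^ ((n:ℝ) + 1) * s ^ (-((n:ℝ) + 1)) *
          (hlCb n (-q) * ((5:ℝ) ^ ((n:ℝ) - q) * s ^ ((n:ℝ) - q)))
        = ((2:ℝ) ^ ((n:ℝ) + 1) * (5:ℝ) ^ ((n:ℝ) - q) * hlCb n (-q)) *
          (s ^ (-((n:ℝ) + 1)) * s ^ ((n:ℝ) - q)) := by ring
      _ = hlCs1 n q * σ ^ (-(q+1)/2) := by rw [e3]; rfl
  -- Piece 2
  have hpiece2 : ∫⁻ y in {y : E | 4 * s ≤ ‖y‖},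
      ENNReal.ofReal (hlF q (x + y) * ‖y‖ ^ (-((n:ℝ) + 1))) ≤
      ENNReal.ofReal (hlCs2 n q * σ ^ (-(q+1)/2)) * volume (ball (0 : E) 1) := by
    have hpt : ∀ y ∈ {y : E | 4 * s ≤ ‖y‖},
        ENNReal.ofReal (hlF q (x + y) * ‖y‖ ^ (-((n:ℝ) + 1))) ≤
        ENNReal.ofReal ((3/4:ℝ) ^ (-q) * ‖y‖ ^ (-q - ((n:ℝ) + 1))) := by
      intro y hy
      have hy4 : 4 * s ≤ ‖y‖ := hy
      have hy0 : (0:ℝ) < ‖y‖ := by linarith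
      have htri : ‖y‖ ≤ ‖x + y‖ + ‖x‖ := by
        calc ‖y‖ = ‖(x + y) - x‖ := by rw [add_sub_cancel_left]
        _ ≤ ‖x + y‖ + ‖x‖ := norm_sub_le _ _
      have hxy : (3/4) * ‖y‖ ≤ ‖x + y‖ := by
        have : ‖x‖ ≤ ‖y‖ / 4 := by linarith
        linarith
      have hxy0 : x + y ≠ 0 := by
        intro h
        rw [h, norm_zero] at hxy
        nlinarith
      have hf1 : hlF q (x + y) ≤ ((3/4) * ‖y‖) ^ (-q) := by
        refine le_trans (hlF_le q hq0 (x + y) hxy0) ?_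
        exact Real.rpow_le_rpow_of_nonpos (by linarith) hxy (by linarith)
      have hf2 : ((3/4:ℝ) * ‖y‖) ^ (-q) = (3/4:ℝ) ^ (-q) * ‖y‖ ^ (-q) :=
        Real.mul_rpow (by norm_num) (norm_nonneg y)
      apply ENNReal.ofReal_le_ofReal
      calc hlF q (x + y) * ‖y‖ ^ (-((n:ℝ) + 1))
          ≤ ((3/4:ℝ) ^ (-q) * ‖y‖ ^ (-q)) * ‖y‖ ^ (-((n:ℝ) + 1)) := by
            rw [← hf2]
            exact mul_le_mul_of_nonneg_right hf1 (Real.rpow_nonneg (norm_nonneg y) _)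
        _ = (3/4:ℝ) ^ (-q) * ‖y‖ ^ (-q - ((n:ℝ) + 1)) := by
            rw [mul_assoc, ← Real.rpow_add hy0]
            ring_nf
    refine le_trans (setLIntegral_mono' (hl_meas_ge (4 * s)) hpt) ?_
    have hconst : ∀ y : E, ENNReal.ofReal ((3/4:ℝ) ^ (-q) * ‖y‖ ^ (-q - ((n:ℝ) + 1)))
        = ENNReal.ofReal ((3/4:ℝ) ^ (-q)) * ENNReal.ofReal (‖y‖ ^ (-q - ((n:ℝ) + 1))) :=
      fun y => ENNReal.ofReal_mul (Real.rpow_nonneg (by norm_num) _)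
    simp_rw [hconst]
    rw [lintegral_const_mul' _ _ ENNReal.ofReal_ne_top]
    have hinner := hl_lint_compl (n := n) (-q - ((n:ℝ) + 1))
      (by push_cast; linarith) (4 * s) (by positivity)
    refine le_trans (mul_le_mul_right hinner _) ?_
    rw [← mul_assoc, ← ENNReal.ofReal_mul (Real.rpow_nonneg (by norm_num) _)]
    apply mul_le_mul_left
    apply ENNReal.ofReal_le_ofReal
    apply le_of_eq
    have e4 : ((4:ℝ) * s) ^ ((n:ℝ) + (-q - ((n:ℝ) + 1)))
        = (4:ℝ) ^ (-(q+1)) * σ ^ (-(q+1)/2) := by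
      rw [show (n:ℝ) + (-q - ((n:ℝ) + 1)) = -(q+1) from by ring,
        Real.mul_rpow (by norm_num) hs0.le, hsdef, ← Real.rpow_mul hσ0.le]
      congr 2
      ring
    rw [e4, hlCs2]
    ring
  calc (∫⁻ y in ({y : E | R ≤ ‖y‖} ∩ {y : E | ‖y‖ ≤ 4 * s}),
        ENNReal.ofReal (hlF q (x + y) * ‖y‖ ^ (-((n:ℝ) + 1)))) +
      ∫⁻ y in {y : E | 4 * s ≤ ‖y‖},
        ENNReal.ofReal (hlF q (x + y) * ‖y‖ ^ (-((n:ℝ) + 1)))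
      ≤ ENNReal.ofReal (hlCs1 n q * σ ^ (-(q+1)/2)) * volume (ball (0 : E) 1) +
        ENNReal.ofReal (hlCs2 n q * σ ^ (-(q+1)/2)) * volume (ball (0 : E) 1) :=
        add_le_add hpiece1 hpiece2
    _ = ENNReal.ofReal ((hlCs1 n q + hlCs2 n q) * σ ^ (-(q+1)/2)) *
        volume (ball (0 : E) 1) := by
        rw [← add_mul, ← ENNReal.ofReal_add (mul_nonneg ?h1 (Real.rpow_nonneg hσ0.le _))
          (mul_nonneg ?h2 (Real.rpow_nonneg hσ0.le _)), ← add_mul]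
        case h1 =>
          have := hlCb_pos (n := n) (r := -q) (by push_cast; linarith)
          have h5 : (0:ℝ) < (5:ℝ) ^ ((n:ℝ) - q) := Real.rpow_pos_of_pos (by norm_num) _
          have h2 : (0:ℝ) < (2:ℝ) ^ ((n:ℝ) + 1) := Real.rpow_pos_of_pos (by norm_num) _
          unfold hlCs1
          positivity
        case h2 =>
          have := hlCc_pos (n := n) (r := -q - ((n:ℝ) + 1)) (by push_cast; linarith)
          have h5 : (0:ℝ) < (3/4:ℝ) ^ (-q) := Real.rpow_pos_of_pos (by norm_num) _
          have h2 : (0:ℝ) < (4:ℝ) ^ (-(q+1)) := Real.rpow_pos_of_pos (by norm_num) _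
          unfold hlCs2
          positivity

lemma hlCs1_pos {n : ℕ} {q : ℝ} (hq0 : 0 < q) (hqn : q < n) : 0 < hlCs1 n q := by
  have h1 := hlCb_pos (n := n) (r := -q) (by linarith)
  have h2 : (0:ℝ) < (2:ℝ) ^ ((n:ℝ) + 1) := Real.rpow_pos_of_pos (by norm_num) _
  have h3 : (0:ℝ) < (5:ℝ) ^ ((n:ℝ) - q) := Real.rpow_pos_of_pos (by norm_num) _
  unfold hlCs1
  positivity

lemma hlCs2_pos {n : ℕ} {q : ℝ} (hq0 : 0 < q) : 0 < hlCs2 n q := by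
  have h1 := hlCc_pos (n := n) (r := -q - ((n:ℝ) + 1)) (by linarith)
  have h2 : (0:ℝ) < (3/4:ℝ) ^ (-q) := Real.rpow_pos_of_pos (by norm_num) _
  have h3 : (0:ℝ) < (4:ℝ) ^ (-(q+1)) := Real.rpow_pos_of_pos (by norm_num) _
  unfold hlCs2
  positivity

noncomputable def hlCnear (n : ℕ) (q : ℝ) : ℝ := hlCq q * hlCb n (1 - (n:ℝ)) / 2

noncomputable def hlCt1 (n : ℕ) (q : ℝ) : ℝ := 2 * hlCc n (-((n:ℝ) + 1))

noncomputable def hlCtot (n : ℕ) (q : ℝ) : ℝ :=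
  hlCnear n q + hlCt1 n q + 2 * (hlCs1 n q + hlCs2 n q)

lemma hlCt1_pos {n : ℕ} (q : ℝ) : 0 < hlCt1 n q := by
  have h1 := hlCc_pos (n := n) (r := -((n:ℝ) + 1)) (by linarith)
  unfold hlCt1
  positivity

lemma hlCnear_pos {n : ℕ} {q : ℝ} (hn : 1 ≤ n) (hq0 : 0 < q) : 0 < hlCnear n q := by
  have h1 := hlCq_pos q hq0
  have h2 := hlCb_pos (n := n) (r := 1 - (n:ℝ)) (by
    have hcast : (1:ℝ) ≤ (n:ℝ) := by exact_mod_cast hn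
    linarith)
  unfold hlCnear
  positivity

lemma hlCtot_pos {n : ℕ} {q : ℝ} (hn : 1 ≤ n) (hq0 : 0 < q) (hqn : q < n) :
    0 < hlCtot n q := by
  have := hlCs1_pos (n := n) hq0 hqn
  have := hlCs2_pos (n := n) (q := q) hq0
  have := hlCt1_pos (n := n) q
  have := hlCnear_pos (n := n) hn hq0
  unfold hlCtot
  positivity


/-- the small-ball estimate (used both for the near part and the ε-tail): -/
lemma hl_lint_G_small (hn : 1 ≤ n) (q : ℝ) (hq0 : 0 < q) (x : E) (ε : ℝ) (hε : 0 < ε)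
    (hεR : ε ≤ (1 + ‖x‖ ^ 2) ^ ((1:ℝ)/2) / 2) :
    ∫⁻ y in {y : E | ‖y‖ ≤ ε}, ENNReal.ofReal |hlG q x y| ≤
    ENNReal.ofReal ((hlCq q * (1 + ‖x‖ ^ 2) ^ (-q/2 - 1) * hlCb n (1 - (n:ℝ))) * ε) *
      volume (ball (0 : E) 1) := by
  set σ : ℝ := 1 + ‖x‖ ^ 2 with hσdef
  have hσ0 : 0 < σ := by positivity
  have hCq := hlCq_pos q hq0
  have hσp : (0:ℝ) < σ ^ (-q/2 - 1) := Real.rpow_pos_of_pos hσ0 _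
  have hpt : ∀ y ∈ {y : E | ‖y‖ ≤ ε},
      ENNReal.ofReal |hlG q x y| ≤
      ENNReal.ofReal ((hlCq q * σ ^ (-q/2 - 1)) * ‖y‖ ^ ((1:ℝ) - n)) := by
    intro y hy
    apply ENNReal.ofReal_le_ofReal
    have := hlG_near q hq0 x y (le_trans hy hεR)
    linarith [this]
  refine le_trans (setLIntegral_mono' (hl_meas_le ε) hpt) ?_
  have hconst : ∀ y : E,
      ENNReal.ofReal ((hlCq q * σ ^ (-q/2 - 1)) * ‖y‖ ^ ((1:ℝ) - n))
      = ENNReal.ofReal (hlCq q * σ ^ (-q/2 - 1)) * ENNReal.ofReal (‖y‖ ^ ((1:ℝ) - n)) :=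
    fun y => ENNReal.ofReal_mul (by positivity)
  simp_rw [hconst]
  rw [lintegral_const_mul' _ _ ENNReal.ofReal_ne_top]
  have hball := hl_lint_ball (n := n) hn ((1:ℝ) - n) (by
    have hcast : (1:ℝ) ≤ (n:ℝ) := by exact_mod_cast hn
    linarith) ε hε
  refine le_trans (mul_le_mul_right hball _) ?_
  rw [← mul_assoc, ← ENNReal.ofReal_mul (by positivity)]
  apply mul_le_mul_left
  apply ENNReal.ofReal_le_ofReal
  rw [show (n:ℝ) + ((1:ℝ) - n) = 1 from by ring, Real.rpow_one]
  apply le_of_eq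
  ring

lemma hl_lint_G_bound (hn : 1 ≤ n) (q : ℝ) (hq0 : 0 < q) (hqn : q < n) (x : E) :
    ∫⁻ y, ENNReal.ofReal |hlG q x y| ≤
    ENNReal.ofReal (hlCtot n q * (1 + ‖x‖ ^ 2) ^ (-(q+1)/2)) * volume (ball (0 : E) 1) := by
  set σ : ℝ := 1 + ‖x‖ ^ 2 with hσdef
  have hσ0 : 0 < σ := by positivity
  set st : ℝ := σ ^ ((1:ℝ)/2) with hsdef
  have hs1 : 1 ≤ st := hl_one_le_s x
  have hs0 : 0 < st := by linarith
  set R : ℝ := st / 2 with hRdef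
  have hR0 : 0 < R := by positivity
  have hCq := hlCq_pos q hq0
  have hσe : (0:ℝ) < σ ^ (-(q+1)/2) := Real.rpow_pos_of_pos hσ0 _
  have hsplit := (lintegral_add_compl (μ := (volume : Measure (EuclideanSpace ℝ (Fin n))))
    (fun y : E => ENNReal.ofReal |hlG q x y|) (hl_meas_le R)).symm
  rw [hsplit]
  -- near part
  have hnear : ∫⁻ y in {y : E | ‖y‖ ≤ R}, ENNReal.ofReal |hlG q x y| ≤
      ENNReal.ofReal (hlCnear n q * σ ^ (-(q+1)/2)) * volume (ball (0 : E) 1) := by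
    refine le_trans (hl_lint_G_small hn q hq0 x R hR0 le_rfl) ?_
    apply mul_le_mul_left
    apply ENNReal.ofReal_le_ofReal
    apply le_of_eq
    have e1 : σ ^ (-q/2 - 1) * st = σ ^ (-(q+1)/2) := by
      rw [hsdef, ← Real.rpow_add hσ0]
      congr 1
      ring
    calc hlCq q * σ ^ (-q/2 - 1) * hlCb n (1 - (n:ℝ)) * R
        = (hlCq q * hlCb n (1 - (n:ℝ)) / 2) * (σ ^ (-q/2 - 1) * st) := by
          rw [hRdef]; ring
      _ = hlCnear n q * σ ^ (-(q+1)/2) := by rw [e1]; rfl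
  -- far part
  have hfar : ∫⁻ y in {y : E | ‖y‖ ≤ R}ᶜ, ENNReal.ofReal |hlG q x y| ≤
      ENNReal.ofReal ((hlCt1 n q + 2 * (hlCs1 n q + hlCs2 n q)) * σ ^ (-(q+1)/2)) *
        volume (ball (0 : E) 1) := by
    have hsub : {y : E | ‖y‖ ≤ R}ᶜ ⊆ {y : E | R ≤ ‖y‖} := by
      intro y hy
      simp only [Set.mem_compl_iff, Set.mem_setOf_eq, not_le] at hy
      exact le_of_lt hy
    refine le_trans (lintegral_mono_set hsub) ?_
    -- pointwise bound on the far set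
    have hpt : ∀ y ∈ {y : E | R ≤ ‖y‖},
        ENNReal.ofReal |hlG q x y| ≤
        ENNReal.ofReal (hlF q x * ‖y‖ ^ (-((n:ℝ) + 1))) +
        (ENNReal.ofReal (hlF q (x + y) * ‖y‖ ^ (-((n:ℝ) + 1))) +
         ENNReal.ofReal (hlF q (x - y) * ‖y‖ ^ (-((n:ℝ) + 1)))) := by
      intro y hy
      have hy0 : y ≠ 0 := by
        intro h
        rw [h] at hy
        simp only [Set.mem_setOf_eq, norm_zero] at hy
        linarith
      have h1 := hlG_far q hq0 x y hy0
      have hw : (0:ℝ) ≤ ‖y‖ ^ (-((n:ℝ) + 1)) := Real.rpow_nonneg (norm_nonneg y) _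
      have h2 : |hlG q x y| ≤ hlF q x * ‖y‖ ^ (-((n:ℝ) + 1)) +
          (hlF q (x + y) * ‖y‖ ^ (-((n:ℝ) + 1)) + hlF q (x - y) * ‖y‖ ^ (-((n:ℝ) + 1))) := by
        have e : (hlF q x + (hlF q (x + y) + hlF q (x - y)) / 2) * ‖y‖ ^ (-((n:ℝ) + 1))
            = hlF q x * ‖y‖ ^ (-((n:ℝ) + 1)) +
              (hlF q (x + y) * ‖y‖ ^ (-((n:ℝ) + 1)) / 2 +
               hlF q (x - y) * ‖y‖ ^ (-((n:ℝ) + 1)) / 2) := by ring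
        rw [e] at h1
        have p1 : (0:ℝ) ≤ hlF q (x + y) * ‖y‖ ^ (-((n:ℝ) + 1)) :=
          mul_nonneg (hlF_pos q _).le hw
        have p2 : (0:ℝ) ≤ hlF q (x - y) * ‖y‖ ^ (-((n:ℝ) + 1)) :=
          mul_nonneg (hlF_pos q _).le hw
        linarith
      calc ENNReal.ofReal |hlG q x y|
          ≤ ENNReal.ofReal (hlF q x * ‖y‖ ^ (-((n:ℝ) + 1)) +
            (hlF q (x + y) * ‖y‖ ^ (-((n:ℝ) + 1)) + hlF q (x - y) * ‖y‖ ^ (-((n:ℝ) + 1)))) :=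
            ENNReal.ofReal_le_ofReal h2
        _ ≤ _ := by
            refine le_trans (ENNReal.ofReal_add_le) ?_
            exact add_le_add le_rfl ENNReal.ofReal_add_le
    refine le_trans (setLIntegral_mono' (hl_meas_ge R) hpt) ?_
    have hmeas2 : Measurable fun y : E =>
        ENNReal.ofReal (hlF q (x + y) * ‖y‖ ^ (-((n:ℝ) + 1))) := by
      apply Measurable.ennreal_ofReal
      exact (((hl_cont q).comp (continuous_const.add continuous_id)).measurable).mul
        (hl_meas_norm_rpow _)
    have hmeas3 : Measurable fun y : E =>
        ENNReal.ofReal (hlF q (x - y) * ‖y‖ ^ (-((n:ℝ) + 1))) := by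
      apply Measurable.ennreal_ofReal
      exact (((hl_cont q).comp (continuous_const.sub continuous_id)).measurable).mul
        (hl_meas_norm_rpow _)
    rw [lintegral_add_left (by
      apply Measurable.ennreal_ofReal
      exact measurable_const.mul (hl_meas_norm_rpow _)),
      lintegral_add_left hmeas2]
    -- T1
    have hT1 : ∫⁻ y in {y : E | R ≤ ‖y‖}, ENNReal.ofReal (hlF q x * ‖y‖ ^ (-((n:ℝ) + 1)))
        ≤ ENNReal.ofReal (hlCt1 n q * σ ^ (-(q+1)/2)) * volume (ball (0 : E) 1) := by
      have hconst : ∀ y : E, ENNReal.ofReal (hlF q x * ‖y‖ ^ (-((n:ℝ) + 1)))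
          = ENNReal.ofReal (hlF q x) * ENNReal.ofReal (‖y‖ ^ (-((n:ℝ) + 1))) :=
        fun y => ENNReal.ofReal_mul (hlF_pos q x).le
      simp_rw [hconst]
      rw [lintegral_const_mul' _ _ ENNReal.ofReal_ne_top]
      have hcompl := hl_lint_compl (n := n) (-((n:ℝ) + 1)) (by linarith) R hR0
      refine le_trans (mul_le_mul_right hcompl _) ?_
      rw [← mul_assoc, ← ENNReal.ofReal_mul (hlF_pos q x).le]
      apply mul_le_mul_left
      apply ENNReal.ofReal_le_ofReal
      apply le_of_eq
      have e1 : R ^ ((n:ℝ) + -((n:ℝ) + 1)) = 2 * st ^ (-(1:ℝ)) := by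
        rw [show (n:ℝ) + -((n:ℝ) + 1) = -(1:ℝ) from by ring, hRdef,
          Real.div_rpow hs0.le (by norm_num : (0:ℝ) ≤ 2), div_eq_mul_inv,
          ← Real.rpow_neg (by norm_num : (0:ℝ) ≤ 2), neg_neg]
        rw [show ((2:ℝ) ^ (1:ℝ)) = 2 from Real.rpow_one 2]
        ring
      have e2 : hlF q x * st ^ (-(1:ℝ)) = σ ^ (-(q+1)/2) := by
        have : hlF q x = σ ^ (-q/2) := rfl
        rw [this, hsdef, ← Real.rpow_mul hσ0.le, ← Real.rpow_add hσ0]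
        congr 1
        ring
      calc hlF q x * (hlCc n (-((n:ℝ) + 1)) * R ^ ((n:ℝ) + -((n:ℝ) + 1)))
          = hlF q x * (hlCc n (-((n:ℝ) + 1)) * (2 * st ^ (-(1:ℝ)))) := by rw [e1]
        _ = (2 * hlCc n (-((n:ℝ) + 1))) * (hlF q x * st ^ (-(1:ℝ))) := by ring
        _ = hlCt1 n q * σ ^ (-(q+1)/2) := by rw [e2]; rfl
    -- T2
    have hT2 := hl_far_piece hn q hq0 hqn x
    -- T3 via symmetry
    have hT3 : ∫⁻ y in {y : E | R ≤ ‖y‖},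
        ENNReal.ofReal (hlF q (x - y) * ‖y‖ ^ (-((n:ℝ) + 1)))
        ≤ ENNReal.ofReal ((hlCs1 n q + hlCs2 n q) * σ ^ (-(q+1)/2)) *
          volume (ball (0 : E) 1) := by
      have hsym : ∀ y : EuclideanSpace ℝ (Fin n),
          -y ∈ {y : E | R ≤ ‖y‖} ↔ y ∈ {y : E | R ≤ ‖y‖} := by
        intro y
        simp [norm_neg]
      have hneg := hl_setlint_neg {y : E | R ≤ ‖y‖} (hl_meas_ge R) hsym
        (fun y => ENNReal.ofReal (hlF q (x + y) * ‖y‖ ^ (-((n:ℝ) + 1))))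
      have hcongr : ∫⁻ y in {y : E | R ≤ ‖y‖},
          ENNReal.ofReal (hlF q (x - y) * ‖y‖ ^ (-((n:ℝ) + 1)))
          = ∫⁻ y in {y : E | R ≤ ‖y‖},
          ENNReal.ofReal (hlF q (x + -y) * ‖(-y)‖ ^ (-((n:ℝ) + 1))) := by
        apply lintegral_congr
        intro y
        rw [norm_neg, ← sub_eq_add_neg]
      rw [hcongr, hneg]
      exact hT2
    calc (∫⁻ y in {y : E | R ≤ ‖y‖}, ENNReal.ofReal (hlF q x * ‖y‖ ^ (-((n:ℝ) + 1)))) +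
        ((∫⁻ y in {y : E | R ≤ ‖y‖},
          ENNReal.ofReal (hlF q (x + y) * ‖y‖ ^ (-((n:ℝ) + 1)))) +
         ∫⁻ y in {y : E | R ≤ ‖y‖},
          ENNReal.ofReal (hlF q (x - y) * ‖y‖ ^ (-((n:ℝ) + 1))))
        ≤ ENNReal.ofReal (hlCt1 n q * σ ^ (-(q+1)/2)) * volume (ball (0 : E) 1) +
          (ENNReal.ofReal ((hlCs1 n q + hlCs2 n q) * σ ^ (-(q+1)/2)) *
            volume (ball (0 : E) 1) +
           ENNReal.ofReal ((hlCs1 n q + hlCs2 n q) * σ ^ (-(q+1)/2)) *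
            volume (ball (0 : E) 1)) := add_le_add hT1 (add_le_add hT2 hT3)
      _ = ENNReal.ofReal ((hlCt1 n q + 2 * (hlCs1 n q + hlCs2 n q)) * σ ^ (-(q+1)/2)) *
          volume (ball (0 : E) 1) := by
          have hfact : ∀ a b : ENNReal, a * volume (ball (0 : E) 1) +
              (b * volume (ball (0 : E) 1) + b * volume (ball (0 : E) 1)) =
              (a + (b + b)) * volume (ball (0 : E) 1) := by
            intro a b; ring
          rw [hfact]
          congr 1
          have hnn1 : (0:ℝ) ≤ hlCt1 n q * σ ^ (-(q+1)/2) :=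
            mul_nonneg (hlCt1_pos (n := n) q).le hσe.le
          have hnn2 : (0:ℝ) ≤ (hlCs1 n q + hlCs2 n q) * σ ^ (-(q+1)/2) :=
            mul_nonneg (by
            have := hlCs1_pos (n := n) hq0 hqn
            have := hlCs2_pos (n := n) (q := q) hq0
            positivity) hσe.le
          rw [← ENNReal.ofReal_add hnn2 hnn2, ← ENNReal.ofReal_add hnn1 (by linarith)]
          congr 1
          ring
  -- combine
  refine le_trans (add_le_add hnear hfar) ?_
  rw [← add_mul]
  apply mul_le_mul_left
  have hnn1 : (0:ℝ) ≤ hlCnear n q * σ ^ (-(q+1)/2) :=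
    mul_nonneg (hlCnear_pos (n := n) hn hq0).le hσe.le
  have hnn2 : (0:ℝ) ≤ (hlCt1 n q + 2 * (hlCs1 n q + hlCs2 n q)) * σ ^ (-(q+1)/2) := by
    have := hlCs1_pos (n := n) hq0 hqn
    have := hlCs2_pos (n := n) (q := q) hq0
    have := hlCt1_pos (n := n) q
    positivity
  rw [← ENNReal.ofReal_add hnn1 hnn2]
  apply ENNReal.ofReal_le_ofReal
  apply le_of_eq
  unfold hlCtot
  ring

lemma hl_G_integrable (hn : 1 ≤ n) (q : ℝ) (hq0 : 0 < q) (hqn : q < n) (x : E) :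
    Integrable (fun y : E => hlG q x y) := by
  rw [← integrableOn_univ]
  refine hl_integrableOn_of_lint (hlG_meas q x) ?_
  rw [Measure.restrict_univ]
  refine lt_of_le_of_lt (hl_lint_G_bound hn q hq0 hqn x) ?_
  exact ENNReal.mul_lt_top ENNReal.ofReal_lt_top measure_ball_lt_top

lemma hl_I_bound (q : ℝ) (hq0 : 0 < q) (x y : E) (hy0 : y ≠ 0) :
    |hlI q x y| ≤ 2 * ‖y‖ ^ (-((n:ℝ) + 1)) := by
  have h0 : 0 < ‖y‖ := norm_pos_iff.2 hy0
  have hd : (0:ℝ) < ‖y‖ ^ (n + 1) := by positivity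
  have hf1 := hlF_pos q x
  have hf2 := hlF_pos q (x + y)
  have hf1' := hlF_le_one q hq0.le x
  have hf2' := hlF_le_one q hq0.le (x + y)
  unfold hlI
  rw [abs_div, abs_of_pos hd]
  have hnum : |hlF q x - hlF q (x + y)| ≤ 2 := by
    rw [abs_le]; constructor <;> linarith
  calc |hlF q x - hlF q (x + y)| / ‖y‖ ^ (n + 1) ≤ 2 / ‖y‖ ^ (n + 1) := by gcongr
    _ = 2 * ‖y‖ ^ (-((n:ℝ) + 1)) := by
        rw [hl_npow_eq, Real.rpow_neg (norm_nonneg y)]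
        ring

lemma hl_I_integrable (q : ℝ) (hq0 : 0 < q) (x : E) (ε : ℝ) (hε : 0 < ε) :
    IntegrableOn (fun y : E => hlI q x y) {y : E | ε ≤ ‖y‖} := by
  refine hl_integrableOn_of_lint (hlI_meas q x) ?_
  have hpt : ∀ y ∈ {y : E | ε ≤ ‖y‖}, ENNReal.ofReal |hlI q x y| ≤
      ENNReal.ofReal 2 * ENNReal.ofReal (‖y‖ ^ (-((n:ℝ) + 1))) := by
    intro y hy
    have hy0 : y ≠ 0 := by
      intro h; rw [h] at hy; simp only [Set.mem_setOf_eq, norm_zero] at hy; linarith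
    rw [← ENNReal.ofReal_mul (by norm_num : (0:ℝ) ≤ 2)]
    exact ENNReal.ofReal_le_ofReal (by simpa using hl_I_bound q hq0 x y hy0)
  refine lt_of_le_of_lt (setLIntegral_mono' (hl_meas_ge ε) hpt) ?_
  rw [lintegral_const_mul' _ _ ENNReal.ofReal_ne_top]
  refine lt_of_le_of_lt (mul_le_mul_right
    (hl_lint_compl (n := n) (-((n:ℝ) + 1)) (by linarith) ε hε) _) ?_
  exact ENNReal.mul_lt_top ENNReal.ofReal_lt_top
    (ENNReal.mul_lt_top ENNReal.ofReal_lt_top measure_ball_lt_top)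

lemma hl_Ineg_integrable (q : ℝ) (hq0 : 0 < q) (x : E) (ε : ℝ) (hε : 0 < ε) :
    IntegrableOn (fun y : E => hlI q x (-y)) {y : E | ε ≤ ‖y‖} := by
  have hmeas : Measurable (fun y : E => hlI q x (-y)) :=
    (hlI_meas q x).comp measurable_neg
  refine hl_integrableOn_of_lint hmeas ?_
  have hpt : ∀ y ∈ {y : E | ε ≤ ‖y‖}, ENNReal.ofReal |hlI q x (-y)| ≤
      ENNReal.ofReal 2 * ENNReal.ofReal (‖y‖ ^ (-((n:ℝ) + 1))) := by
    intro y hy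
    have hy0 : y ≠ 0 := by
      intro h; rw [h] at hy; simp only [Set.mem_setOf_eq, norm_zero] at hy; linarith
    rw [← ENNReal.ofReal_mul (by norm_num : (0:ℝ) ≤ 2)]
    refine ENNReal.ofReal_le_ofReal ?_
    have := hl_I_bound q hq0 x (-y) (by simpa using hy0)
    simpa [norm_neg] using this
  refine lt_of_le_of_lt (setLIntegral_mono' (hl_meas_ge ε) hpt) ?_
  rw [lintegral_const_mul' _ _ ENNReal.ofReal_ne_top]
  refine lt_of_le_of_lt (mul_le_mul_right
    (hl_lint_compl (n := n) (-((n:ℝ) + 1)) (by linarith) ε hε) _) ?_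
  exact ENNReal.mul_lt_top ENNReal.ofReal_lt_top
    (ENNReal.mul_lt_top ENNReal.ofReal_lt_top measure_ball_lt_top)

lemma hl_sym_eq (q : ℝ) (hq0 : 0 < q) (x : E) (ε : ℝ) (hε : 0 < ε) :
    ∫ y in {y : E | ε ≤ ‖y‖}, hlI q x y = ∫ y in {y : E | ε ≤ ‖y‖}, hlG q x y := by
  have hsym : ∀ y : EuclideanSpace ℝ (Fin n),
      -y ∈ {y : E | ε ≤ ‖y‖} ↔ y ∈ {y : E | ε ≤ ‖y‖} := by intro y; simp [norm_neg]
  have hneg : ∫ y in {y : E | ε ≤ ‖y‖}, hlI q x (-y)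
      = ∫ y in {y : E | ε ≤ ‖y‖}, hlI q x y :=
    hl_setint_neg {y : E | ε ≤ ‖y‖} (hl_meas_ge ε) hsym (hlI q x)
  have hint1 := hl_I_integrable q hq0 x ε hε
  have hint2 := hl_Ineg_integrable q hq0 x ε hε
  have hG : ∫ y in {y : E | ε ≤ ‖y‖}, hlG q x y
      = ∫ y in {y : E | ε ≤ ‖y‖}, (hlI q x y + hlI q x (-y)) / 2 := by
    apply setIntegral_congr_fun (hl_meas_ge ε)
    intro y _
    exact hlG_eq q x y
  rw [hG, integral_div, integral_add hint1 hint2, hneg]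
  ring

lemma hl_tendsto (hn : 1 ≤ n) (q : ℝ) (hq0 : 0 < q) (hqn : q < n) (x : E) :
    Filter.Tendsto (fun ε : ℝ => ∫ y in {y : E | ε ≤ ‖y‖}, hlG q x y)
      (nhdsWithin 0 (Set.Ioi 0)) (nhds (∫ y : E, hlG q x y)) := by
  set σ : ℝ := 1 + ‖x‖ ^ 2 with hσdef
  have hσ0 : 0 < σ := by positivity
  set R : ℝ := σ ^ ((1:ℝ)/2) / 2 with hRdef
  have hR0 : 0 < R := by
    have := hl_one_le_s x
    rw [hRdef]
    linarith
  set K : ℝ := hlCq q * σ ^ (-q/2 - 1) * hlCb n (1 - (n:ℝ)) *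
    (volume (ball (0 : E) 1)).toReal with hKdef
  have hint := hl_G_integrable hn q hq0 hqn x
  have hCq := hlCq_pos q hq0
  have hCb := hlCb_pos (n := n) (r := 1 - (n:ℝ)) (by
    have hcast : (1:ℝ) ≤ (n:ℝ) := by exact_mod_cast hn
    linarith)
  have hσp : (0:ℝ) < σ ^ (-q/2 - 1) := Real.rpow_pos_of_pos hσ0 _
  have key : ∀ ε : ℝ, 0 < ε → ε ≤ R →
      |(∫ y in {y : E | ε ≤ ‖y‖}, hlG q x y) - ∫ y : E, hlG q x y| ≤ K * ε := by
    intro ε hε hεR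
    have hsplit := integral_add_compl (hl_meas_ge ε) hint
    have heq : (∫ y in {y : E | ε ≤ ‖y‖}, hlG q x y) - ∫ y : E, hlG q x y
        = -(∫ y in {y : E | ε ≤ ‖y‖}ᶜ, hlG q x y) := by
      rw [← hsplit]; ring
    rw [heq, abs_neg]
    have h1 := hl_abs_integral_le (s := {y : E | ε ≤ ‖y‖}ᶜ) (hlG_meas q x)
    have hsub : {y : E | ε ≤ ‖y‖}ᶜ ⊆ {y : E | ‖y‖ ≤ ε} := by
      intro y hy
      simp only [Set.mem_compl_iff, Set.mem_setOf_eq, not_le] at hy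
      exact le_of_lt hy
    have h2 : (∫⁻ y in {y : E | ε ≤ ‖y‖}ᶜ, ENNReal.ofReal |hlG q x y|)
        ≤ ENNReal.ofReal ((hlCq q * σ ^ (-q/2 - 1) * hlCb n (1 - (n:ℝ))) * ε) *
          volume (ball (0 : E) 1) :=
      le_trans (lintegral_mono_set hsub) (hl_lint_G_small hn q hq0 x ε hε hεR)
    have h3 : ((∫⁻ y in {y : E | ε ≤ ‖y‖}ᶜ, ENNReal.ofReal |hlG q x y|)).toReal ≤ K * ε := by
      refine le_trans (ENNReal.toReal_mono ?_ h2) ?_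
      · exact (ENNReal.mul_lt_top ENNReal.ofReal_lt_top measure_ball_lt_top).ne
      · rw [ENNReal.toReal_mul, ENNReal.toReal_ofReal
          (mul_nonneg (mul_nonneg (mul_nonneg hCq.le hσp.le) hCb.le) hε.le)]
        rw [hKdef]
        exact le_of_eq (by ring)
    linarith
  rw [tendsto_iff_norm_sub_tendsto_zero]
  have hK0 : Filter.Tendsto (fun ε : ℝ => K * ε) (nhdsWithin 0 (Set.Ioi 0)) (nhds 0) := by
    have h : Filter.Tendsto (fun ε : ℝ => K * ε) (nhds 0) (nhds (K * 0)) :=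
      (continuous_const.mul continuous_id).tendsto 0
    rw [mul_zero] at h
    exact h.mono_left nhdsWithin_le_nhds
  have hev : ∀ᶠ ε in nhdsWithin (0:ℝ) (Set.Ioi 0), ε ∈ Set.Ioc 0 R :=
    Ioc_mem_nhdsGT_of_mem ⟨le_refl 0, hR0⟩
  refine squeeze_zero' ?_ ?_ hK0
  · exact Filter.Eventually.of_forall fun ε => norm_nonneg _
  · refine hev.mono fun ε hε => ?_
    simpa [Real.norm_eq_abs] using key ε hε.1 hε.2

end HalfLap

open Filter

/-- Pointwise bound for the half-Laplacian of the weight `⟨·⟩^{-q}`, case `0 < q < n`: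
any principal-value limit `L` of the singular integral satisfies `|L| ≤ A ⟨x⟩^{-q-1}`. -/
theorem halfLaplacian_weight_bound_subcritical (n : ℕ) (hn : 1 ≤ n) (q : ℝ)
    (hq0 : 0 < q) (hq : q < (n : ℝ)) :
    ∃ A > (0:ℝ), ∀ (x : EuclideanSpace ℝ (Fin n)) (L : ℝ),
      Tendsto
        (fun ε : ℝ => ∫ y in {y : EuclideanSpace ℝ (Fin n) | ε ≤ ‖y‖},
          ((1 + ‖x‖ ^ 2) ^ (-q / 2) - (1 + ‖x + y‖ ^ 2) ^ (-q / 2)) / ‖y‖ ^ (n + 1))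
        (nhdsWithin 0 (Set.Ioi 0)) (nhds L) →
      |L| ≤ A * (1 + ‖x‖ ^ 2) ^ (-(q + 1) / 2) := by
  have hVt : (0:ℝ) ≤ (volume (ball (0 : EuclideanSpace ℝ (Fin n)) 1)).toReal :=
    ENNReal.toReal_nonneg
  have hCtot := hlCtot_pos (n := n) hn hq0 hq
  refine ⟨hlCtot n q * (volume (ball (0 : EuclideanSpace ℝ (Fin n)) 1)).toReal + 1,
    by positivity, ?_⟩
  intro x L hT
  have hT' : Tendsto
      (fun ε : ℝ => ∫ y in {y : EuclideanSpace ℝ (Fin n) | ε ≤ ‖y‖}, hlI q x y)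
      (nhdsWithin 0 (Set.Ioi 0)) (nhds L) := hT
  have hev : ∀ᶠ ε in nhdsWithin (0:ℝ) (Set.Ioi 0),
      (∫ y in {y : EuclideanSpace ℝ (Fin n) | ε ≤ ‖y‖}, hlI q x y)
      = ∫ y in {y : EuclideanSpace ℝ (Fin n) | ε ≤ ‖y‖}, hlG q x y := by
    filter_upwards [self_mem_nhdsWithin] with ε hε
    exact hl_sym_eq q hq0 x ε hε
  have hT2 := Filter.Tendsto.congr' hev hT'
  have hT3 := hl_tendsto hn q hq0 hq x
  have hLeq : L = ∫ y : EuclideanSpace ℝ (Fin n), hlG q x y := tendsto_nhds_unique hT2 hT3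
  rw [hLeq]
  have habs := hl_abs_integral_le (s := (Set.univ : Set (EuclideanSpace ℝ (Fin n))))
    (hlG_meas q x)
  rw [Measure.restrict_univ] at habs
  refine le_trans habs ?_
  have hbound := hl_lint_G_bound hn q hq0 hq x
  have hσ0 : (0:ℝ) < 1 + ‖x‖ ^ 2 := by positivity
  have hσe : (0:ℝ) < (1 + ‖x‖ ^ 2) ^ (-(q + 1) / 2) := Real.rpow_pos_of_pos hσ0 _
  have hne : ENNReal.ofReal (hlCtot n q * (1 + ‖x‖ ^ 2) ^ (-(q+1)/2)) *
      volume (ball (0 : EuclideanSpace ℝ (Fin n)) 1) ≠ ⊤ :=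
    (ENNReal.mul_lt_top ENNReal.ofReal_lt_top measure_ball_lt_top).ne
  refine le_trans (ENNReal.toReal_mono hne hbound) ?_
  rw [ENNReal.toReal_mul, ENNReal.toReal_ofReal (by positivity)]
  nlinarith [hσe.le, hCtot.le, hVt]
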